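/- Let m₁, m₂, n₁ be positive real numbers and set D = m₁ + n₁ + 6m₂. Then D² − 4(n₁ + m₂)(m₁ + m₂) > 0, and for every θ ∈ (0, π/2) the equation m₁ + n₁ + 4m₂ = m₁·(cot θ)² + n₁·(tan θ)² + 4m₂·(cot 2θ)² holds if and only if (tan θ)² = (D + √(D² − 4(n₁+m₂)(m₁+m₂)))/(2(n₁+m₂)) or (tan θ)² = (D − √(D² − 4(n₁+m₂)(m₁+m₂)))/(2(n₁+m₂)). -/

import Mathlib

open Real

theorem stmt_4 (m₁ m₂ n₁ : ℝ) (hm₁ : 0 < m₁) (hm₂ : 0 < m₂) (hn₁ : 0 < n₁)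
    (D : ℝ) (hD : D = m₁ + n₁ + 6 * m₂) :
    D ^ 2 - 4 * (n₁ + m₂) * (m₁ + m₂) > 0 ∧
    ∀ θ ∈ Set.Ioo 0 (π / 2),
      (m₁ + n₁ + 4 * m₂ =
          m₁ * (Real.cot θ) ^ 2 + n₁ * (Real.tan θ) ^ 2 +
            4 * m₂ * (Real.cot (2 * θ)) ^ 2 ↔
        (Real.tan θ) ^ 2 =
            (D + Real.sqrt (D ^ 2 - 4 * (n₁ + m₂) * (m₁ + m₂))) / (2 * (n₁ + m₂)) ∨
          (Real.tan θ) ^ 2 =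
            (D - Real.sqrt (D ^ 2 - 4 * (n₁ + m₂) * (m₁ + m₂))) / (2 * (n₁ + m₂))) := by
  have hΔ : D ^ 2 - 4 * (n₁ + m₂) * (m₁ + m₂) > 0 := by
    subst hD; nlinarith [sq_nonneg (m₁ - n₁), mul_pos hm₂ hm₁, mul_pos hm₂ hn₁, mul_pos hm₂ hm₂]
  refine ⟨hΔ, ?_⟩
  set Δ := D ^ 2 - 4 * (n₁ + m₂) * (m₁ + m₂) with hΔdef
  have ha : 0 < n₁ + m₂ := by linarith
  have hsq : Real.sqrt Δ ^ 2 = Δ := Real.sq_sqrt hΔ.le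
  have hroot : ∀ x : ℝ, (n₁ + m₂) * x ^ 2 - D * x + (m₁ + m₂) = 0 ↔
      x = (D + Real.sqrt Δ) / (2 * (n₁ + m₂)) ∨ x = (D - Real.sqrt Δ) / (2 * (n₁ + m₂)) := by
    intro x
    constructor
    · intro h
      have hfac : (2 * (n₁ + m₂) * x - D - Real.sqrt Δ) * (2 * (n₁ + m₂) * x - D + Real.sqrt Δ) = 0 := by
        nlinarith [hsq, h]
      rcases mul_eq_zero.mp hfac with h' | h'
      · left; field_simp; linarith
      · right; field_simp; linarith
    · rintro (h | h) <;> rw [h] <;> field_simp <;> nlinarith [hsq]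
  rintro θ ⟨h1, h2⟩
  have hs : 0 < sin θ := Real.sin_pos_of_pos_of_lt_pi h1 (by linarith [Real.pi_pos])
  have hc : 0 < cos θ := Real.cos_pos_of_mem_Ioo ⟨by linarith [Real.pi_pos], h2⟩
  have hpy : sin θ ^ 2 + cos θ ^ 2 = 1 := Real.sin_sq_add_cos_sq θ
  rw [Real.tan_eq_sin_div_cos, Real.cot_eq_cos_div_sin, Real.cot_eq_cos_div_sin,
    Real.sin_two_mul, Real.cos_two_mul]
  rw [← hroot ((sin θ / cos θ) ^ 2)]
  subst hD
  constructor
  · intro h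
    field_simp at h
    have h4 : (4 * sin θ ^ 2 * cos θ ^ 2) *
        ((n₁ + m₂) * sin θ ^ 4 - (m₁ + n₁ + 6 * m₂) * sin θ ^ 2 * cos θ ^ 2
          + (m₁ + m₂) * cos θ ^ 4) = 0 := by
      linear_combination (-(sin θ ^ 2 * cos θ ^ 2)) * h +
        (-4 * m₂ * sin θ ^ 2 * cos θ ^ 2 * (3 * cos θ ^ 2 - sin θ ^ 2 - 1)) * hpy
    have key : (n₁ + m₂) * sin θ ^ 4 - (m₁ + n₁ + 6 * m₂) * sin θ ^ 2 * cos θ ^ 2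
        + (m₁ + m₂) * cos θ ^ 4 = 0 := by
      rcases mul_eq_zero.mp h4 with h' | h'
      · exact absurd h' (by positivity)
      · exact h'
    field_simp
    linear_combination key
  · intro h
    field_simp at h
    field_simp
    linear_combination (-4) * h +
      (-4 * m₂ * (3 * cos θ ^ 2 - sin θ ^ 2 - 1)) * hpy
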